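/- arXiv:1411.5958 — 2 statements merged into one kernel-verified Lean document; each statement's English description precedes it below -/
import Mathlib

section
/- Let q > 0 and let P be a q-stable finite multiset of vectors in a finite-dimensional vector space satisfying (number of nonzero vectors of P) ≤ dim(span P) + q. Then P is indecomposable, i.e., P admits no partition into two submultisets P₁, P₂ whose spans are both nonzero and whose spans are linearly independent (intersect trivially with sum equal to span P as a direct sum). -/
open scoped Classical

/-- The linear span of (the set of elements of) a multiset of vectors. -/
def mSpan (F : Type*) {V : Type*} [Field F] [AddCommGroup V] [Module F V]
    (P : Multiset V) : Submodule F V :=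
  Submodule.span F {x | x ∈ P}

/-- A finite multiset `P` of vectors is `q`-stable if its linear span is unchanged after
removing any at most `q` vectors (counted with multiplicity). -/
def QStable (F : Type*) {V : Type*} [Field F] [AddCommGroup V] [Module F V]
    (q : ℕ) (P : Multiset V) : Prop :=
  ∀ S : Multiset V, S ≤ P → Multiset.card S ≤ q → mSpan F (P - S) = mSpan F P

/-- The number of nonzero vectors of a multiset, with multiplicity. -/
noncomputable def nnz {V : Type*} [Zero V] (P : Multiset V) : ℕ :=
  Multiset.card (Multiset.filter (fun v => v ≠ 0) P)

section Aux

variable {F V : Type*} [Field F] [AddCommGroup V] [Module F V]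


lemma mSpan_mono {P Q : Multiset V} (h : P ≤ Q) : mSpan F P ≤ mSpan F Q :=
  Submodule.span_mono (fun x hx => Multiset.mem_of_le h hx)

lemma mSpan_add (P Q : Multiset V) : mSpan F (P + Q) = mSpan F P ⊔ mSpan F Q := by
  rw [mSpan, mSpan, mSpan, ← Submodule.span_union]
  congr 1
  ext x; simp [Multiset.mem_add]

lemma mSpan_filter (P : Multiset V) :
    mSpan F (P.filter (fun v => v ≠ 0)) = mSpan F P := by
  apply le_antisymm
  · exact mSpan_mono (Multiset.filter_le _ _)
  · apply Submodule.span_le.mpr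
    intro x hx
    by_cases hx0 : x = 0
    · subst hx0; exact Submodule.zero_mem _
    · exact Submodule.subset_span (by simpa [Multiset.mem_filter, hx0] using hx)

lemma finrank_mSpan_le (P : Multiset V) :
    Module.finrank F (mSpan F P) ≤ Multiset.card P := by
  have h1 : mSpan F P = Submodule.span F (↑P.toFinset : Set V) := by
    rw [mSpan]; congr 1; ext x; simp
  rw [h1]
  exact le_trans (finrank_span_finset_le_card (R := F) P.toFinset) P.toFinset_card_le

lemma key [FiniteDimensional F V] (q : ℕ) (Q : Multiset V)
    (hQ : ∀ S : Multiset V, S ≤ Q → Multiset.card S ≤ q → mSpan F (Q - S) = mSpan F Q)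
    (hbot : mSpan F Q ≠ ⊥) :
    Module.finrank F (mSpan F Q) + q ≤ Multiset.card (Multiset.filter (fun v => v ≠ 0) Q) := by
  by_contra h
  push_neg at h
  set d := Module.finrank F (mSpan F Q) with hd
  set N := Multiset.filter (fun v : V => v ≠ 0) Q with hN
  have hd1 : 1 ≤ d := Nat.one_le_iff_ne_zero.mpr
    (fun h0 => hbot (Submodule.finrank_eq_zero.mp h0))
  have hdN : d ≤ Multiset.card N := by
    rw [hd, ← mSpan_filter Q, ← hN]
    exact finrank_mSpan_le N
  -- choose a submultiset S of N with card N - (d-1) elements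
  set k := Multiset.card N - (d - 1) with hk
  set S : Multiset V := ((N.toList.take k : List V) : Multiset V) with hS
  have hSN : S ≤ N := by
    rw [hS]
    have : List.Subperm (N.toList.take k) N.toList := (List.take_sublist k N.toList).subperm
    calc ((N.toList.take k : List V) : Multiset V) ≤ (N.toList : Multiset V) := Multiset.coe_le.mpr this
      _ = N := N.coe_toList
  have hcardS : Multiset.card S = k := by
    rw [hS]
    simp only [Multiset.coe_card, List.length_take, Multiset.length_toList]
    omega
  have hSQ : S ≤ Q := le_trans hSN (Multiset.filter_le _ Q)
  have hcardSq : Multiset.card S ≤ q := by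
    rw [hcardS]; omega
  have hspan := hQ S hSQ hcardSq
  have hNS : Multiset.card (N - S) = d - 1 := by
    rw [Multiset.card_sub hSN, hcardS]; omega
  have hfilter : Multiset.filter (fun v : V => v ≠ 0) (Q - S) = N - S := by
    rw [Multiset.filter_sub, ← hN]
    congr 1
    refine Multiset.filter_eq_self.mpr (fun a ha => ?_)
    have h2 := Multiset.mem_of_le hSN ha
    rw [hN] at h2
    exact (Multiset.mem_filter.mp h2).2
  have hlt : Module.finrank F (mSpan F (Q - S)) ≤ d - 1 := by
    rw [← mSpan_filter (Q - S), hfilter]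
    exact le_trans (finrank_mSpan_le (N - S)) (le_of_eq hNS)
  rw [hspan, ← hd] at hlt
  omega

lemma sup_cancel_of_disjoint {A' A B : Submodule F V} (hle : A' ≤ A)
    (hdisj : Disjoint A B) (h : A' ⊔ B = A ⊔ B) : A' = A := by
  have h1 : (A' ⊔ B) ⊓ A = A' ⊔ (B ⊓ A) := sup_inf_assoc_of_le B hle
  rw [hdisj.symm.eq_bot, sup_bot_eq] at h1
  rw [h, inf_eq_right.mpr le_sup_left] at h1
  exact h1.symm

lemma comp_stable (q : ℕ) (P₁ P₂ : Multiset V)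
    (hP : ∀ S : Multiset V, S ≤ P₁ + P₂ → Multiset.card S ≤ q →
      mSpan F (P₁ + P₂ - S) = mSpan F (P₁ + P₂))
    (hdisj : Disjoint (mSpan F P₁) (mSpan F P₂)) :
    ∀ S : Multiset V, S ≤ P₁ → Multiset.card S ≤ q → mSpan F (P₁ - S) = mSpan F P₁ := by
  intro S hS hc
  have h1 := hP S (le_trans hS le_self_add) hc
  have h2 : P₁ + P₂ - S = (P₁ - S) + P₂ := by
    rw [add_comm P₁ P₂, add_tsub_assoc_of_le hS, add_comm]
  rw [h2, mSpan_add, mSpan_add] at h1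
  exact sup_cancel_of_disjoint (mSpan_mono (tsub_le_self)) hdisj h1

theorem stmt_2' [FiniteDimensional F V]
    (q : ℕ) (hq : 0 < q) (P : Multiset V)
    (hP : ∀ S : Multiset V, S ≤ P → Multiset.card S ≤ q → mSpan F (P - S) = mSpan F P)
    (hcard : Multiset.card (Multiset.filter (fun v : V => v ≠ 0) P) ≤ Module.finrank F (mSpan F P) + q) :
    ¬ ∃ P₁ P₂ : Multiset V, P = P₁ + P₂ ∧ mSpan F P₁ ≠ ⊥ ∧ mSpan F P₂ ≠ ⊥ ∧
      Disjoint (mSpan F P₁) (mSpan F P₂) := by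
  rintro ⟨P₁, P₂, rfl, h1, h2, hdisj⟩
  have hP' : ∀ S : Multiset V, S ≤ P₂ + P₁ → Multiset.card S ≤ q →
      mSpan F (P₂ + P₁ - S) = mSpan F (P₂ + P₁) := by
    intro S hS hc
    rw [add_comm P₂ P₁] at hS ⊢
    exact hP S hS hc
  have k1 := key q P₁ (comp_stable q P₁ P₂ hP hdisj) h1
  have k2 := key q P₂ (comp_stable q P₂ P₁ hP' hdisj.symm) h2
  have hsum : Multiset.card (Multiset.filter (fun v : V => v ≠ 0) (P₁ + P₂)) =
      Multiset.card (Multiset.filter (fun v : V => v ≠ 0) P₁) +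
      Multiset.card (Multiset.filter (fun v : V => v ≠ 0) P₂) := by
    rw [Multiset.filter_add, Multiset.card_add]
  have hfr : Module.finrank F (mSpan F (P₁ + P₂)) =
      Module.finrank F (mSpan F P₁) + Module.finrank F (mSpan F P₂) := by
    rw [mSpan_add]
    have h3 := Submodule.finrank_sup_add_finrank_inf_eq (mSpan F P₁) (mSpan F P₂)
    rw [hdisj.eq_bot] at h3
    simpa [finrank_bot] using h3
  omega

end Aux

/-- If `q > 0` and `P` is `q`-stable with at most `dim (span P) + q` nonzero vectors, then
`P` is indecomposable: it admits no partition into two submultisets with nonzero,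
linearly independent (trivially intersecting) spans. -/


theorem stmt_2 {F V : Type*} [Field F] [AddCommGroup V] [Module F V] [FiniteDimensional F V]
    (q : ℕ) (hq : 0 < q) (P : Multiset V) (hP : QStable F q P)
    (hcard : nnz P ≤ Module.finrank F (mSpan F P) + q) :
    ¬ ∃ P₁ P₂ : Multiset V, P = P₁ + P₂ ∧ mSpan F P₁ ≠ ⊥ ∧ mSpan F P₂ ≠ ⊥ ∧
      Disjoint (mSpan F P₁) (mSpan F P₂) := by
  exact stmt_2' q hq P hP hcard
end

section
/- If a q-stable finite multiset P of vectors decomposes as a disjoint union of two submultisets P₁ and P₂ whose spans are linearly independent (the sum of the spans is direct), then both P₁ and P₂ are q-stable. -/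
open scoped Classical

lemma mSpan_add_s3 (F : Type*) {V : Type*} [Field F] [AddCommGroup V] [Module F V]
    (A B : Multiset V) : mSpan F (A + B) = mSpan F A ⊔ mSpan F B := by
  unfold mSpan
  rw [← Submodule.span_union]
  congr 1
  ext x
  simp [Multiset.mem_add]

lemma mSpan_mono_s3 (F : Type*) {V : Type*} [Field F] [AddCommGroup V] [Module F V]
    {A B : Multiset V} (h : A ≤ B) : mSpan F A ≤ mSpan F B :=
  Submodule.span_mono (fun x hx => Multiset.mem_of_le h hx)

lemma eq_of_sup_eq_sup {F V : Type*} [Field F] [AddCommGroup V] [Module F V]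
    {a b c : Submodule F V} (hab : a ≤ b) (h : a ⊔ c = b ⊔ c) (hd : Disjoint b c) :
    a = b := by
  have : b = b ⊓ (b ⊔ c) := (inf_eq_left.mpr le_sup_left).symm
  rw [this, ← h, inf_comm, sup_inf_assoc_of_le c hab,
    (disjoint_iff.mp hd.symm), sup_bot_eq]

lemma qstable_left {F V : Type*} [Field F] [AddCommGroup V] [Module F V]
    (q : ℕ) (P P₁ P₂ : Multiset V) (hP : QStable F q P) (hsum : P = P₁ + P₂)
    (hdisj : Disjoint (mSpan F P₁) (mSpan F P₂)) : QStable F q P₁ := by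
  intro S hS hcard
  have hSP : S ≤ P := hsum ▸ le_trans hS (Multiset.le_add_right _ _)
  have key : mSpan F (P - S) = mSpan F P := hP S hSP hcard
  have hsub : P - S = (P₁ - S) + P₂ := by
    rw [hsum, tsub_add_eq_add_tsub hS]
  rw [hsub, hsum, mSpan_add_s3, mSpan_add_s3] at key
  exact eq_of_sup_eq_sup (mSpan_mono_s3 F (Multiset.sub_le_self _ _)) key hdisj

/-- If a `q`-stable multiset `P` is a disjoint union of two submultisets whose spans are
linearly independent (the sum of the spans is direct), then both parts are `q`-stable. -/
theorem stmt_3 {F V : Type*} [Field F] [AddCommGroup V] [Module F V]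
    (q : ℕ) (P P₁ P₂ : Multiset V) (hP : QStable F q P) (hsum : P = P₁ + P₂)
    (hdisj : Disjoint (mSpan F P₁) (mSpan F P₂)) :
    QStable F q P₁ ∧ QStable F q P₂ := by
  constructor
  · exact qstable_left q P P₁ P₂ hP hsum hdisj
  · exact qstable_left q P P₂ P₁ hP (by rw [hsum, add_comm]) hdisj.symm
end
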